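/- Let P be a polymatroid on [n] and let a, a* be bases agreeing outside {h, h+1} with a_h < a*_h. If h is externally active with respect to a (under the natural order), then there exists a set I with h = min(I) that is tight for both a and a*; consequently h+1 ∈ I, h is externally active with respect to a*, and h+1 is externally active with respect to both a and a* under the order with h and h+1 swapped. -/

import Mathlib

open Finset

/-- The `i`-th standard basis vector in `ℤ^n`. -/
def e {n : ℕ} (i : Fin n) : Fin n → ℤ := fun t => if t = i then 1 else 0

/-- Membership characterization of the polymatroid `P_f`. -/
def IsPolymatroid {n : ℕ} (P : Set (Fin n → ℤ)) (f : Finset (Fin n) → ℤ) : Prop :=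
  (f ∅ = 0) ∧ (∀ I J : Finset (Fin n), f (I ∪ J) + f (I ∩ J) ≤ f I + f J) ∧
    (∀ a : Fin n → ℤ, a ∈ P ↔
      (∀ I : Finset (Fin n), ∑ t ∈ I, a t ≤ f I) ∧ ∑ t, a t = f univ)

/-- `i` is internally active w.r.t. the basis `a` of `P` for the order `lt`. -/
def IntActO {n : ℕ} (P : Set (Fin n → ℤ)) (lt : Fin n → Fin n → Prop)
    (a : Fin n → ℤ) (i : Fin n) : Prop :=
  ∀ j : Fin n, lt j i → a - e i + e j ∉ P

/-- `i` is externally active w.r.t. the basis `a` of `P` for the order `lt`. -/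
def ExtActO {n : ℕ} (P : Set (Fin n → ℤ)) (lt : Fin n → Fin n → Prop)
    (a : Fin n → ℤ) (i : Fin n) : Prop :=
  ∀ j : Fin n, lt j i → a + e i - e j ∉ P

/-- Internal activity for the natural order on `Fin n`. -/
def IntAct {n : ℕ} (P : Set (Fin n → ℤ)) (a : Fin n → ℤ) (i : Fin n) : Prop :=
  IntActO P (· < ·) a i

/-- External activity for the natural order on `Fin n`. -/
def ExtAct {n : ℕ} (P : Set (Fin n → ℤ)) (a : Fin n → ℤ) (i : Fin n) : Prop :=
  ExtActO P (· < ·) a i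

noncomputable def oi {n : ℕ} (P : Set (Fin n → ℤ)) (a : Fin n → ℤ) : ℕ :=
  {i : Fin n | IntAct P a i ∧ ¬ ExtAct P a i}.ncard

noncomputable def oe {n : ℕ} (P : Set (Fin n → ℤ)) (a : Fin n → ℤ) : ℕ :=
  {i : Fin n | ExtAct P a i ∧ ¬ IntAct P a i}.ncard

noncomputable def ie {n : ℕ} (P : Set (Fin n → ℤ)) (a : Fin n → ℤ) : ℕ :=
  {i : Fin n | IntAct P a i ∧ ExtAct P a i}.ncard

/-- The polymatroid Tutte polynomial evaluated at `(x, y)`. -/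
noncomputable def TP {n : ℕ} (P : Set (Fin n → ℤ)) {R : Type*} [CommRing R]
    (x y : R) : R :=
  ∑ᶠ a ∈ P, x ^ oi P a * y ^ oe P a * (x + y - 1) ^ ie P a

theorem stmt11 {n : ℕ} (P : Set (Fin n → ℤ)) (f : Finset (Fin n) → ℤ)
    (hP : IsPolymatroid P f) (h h' : Fin n) (hh' : (h' : ℕ) = (h : ℕ) + 1)
    (a astar : Fin n → ℤ) (ha : a ∈ P) (hastar : astar ∈ P)
    (hagree : ∀ t : Fin n, t ≠ h → t ≠ h' → a t = astar t)
    (hlt : a h < astar h) (hext : ExtAct P a h) :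
    (∃ I : Finset (Fin n), (h ∈ I ∧ ∀ t ∈ I, h ≤ t) ∧
        (∑ t ∈ I, a t = f I) ∧ (∑ t ∈ I, astar t = f I) ∧ h' ∈ I) ∧
      ExtAct P astar h ∧
      ExtActO P (fun x y => Equiv.swap h h' x < Equiv.swap h h' y) a h' ∧
      ExtActO P (fun x y => Equiv.swap h h' x < Equiv.swap h h' y) astar h' := by
  obtain ⟨hf0, hsub, hmem⟩ := hP
  obtain ⟨ha1, ha2⟩ := (hmem a).mp ha
  obtain ⟨hb1, hb2⟩ := (hmem astar).mp hastar
  have hne : h ≠ h' := by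
    intro heq
    rw [heq] at hh'
    omega
  have hhlt : h < h' := by
    rw [Fin.lt_def]; omega
  have hesum : ∀ (I : Finset (Fin n)) (x : Fin n),
      ∑ t ∈ I, e x t = if x ∈ I then 1 else 0 := by
    intro I x
    simp [e, Finset.sum_ite_eq' I x]
  -- key: if I is tight for c, x ∈ I, j ∉ I, then c + e x - e j ∉ P
  have keyNot : ∀ (c : Fin n → ℤ) (I : Finset (Fin n)) (x j : Fin n),
      (∑ t ∈ I, c t = f I) → x ∈ I → j ∉ I → c + e x - e j ∉ P := by
    intro c I x j htight hx hj hmemP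
    obtain ⟨h1, _⟩ := (hmem _).mp hmemP
    have h2 := h1 I
    simp only [Pi.sub_apply, Pi.add_apply, Finset.sum_sub_distrib,
      Finset.sum_add_distrib, hesum, htight, if_pos hx, if_neg hj] at h2
    omega
  -- Step 1: for each j < h, there is a tight set containing h and not j
  have step1 : ∀ j : Fin n, j < h → ∃ I : Finset (Fin n),
      (∑ t ∈ I, a t = f I) ∧ h ∈ I ∧ j ∉ I := by
    intro j hj
    have hnp := hext j hj
    have hjh : j ≠ h := ne_of_lt hj
    have htot : ∑ t, (a + e h - e j) t = f univ := by
      simp only [Pi.sub_apply, Pi.add_apply, Finset.sum_sub_distrib,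
        Finset.sum_add_distrib, hesum, Finset.mem_univ, if_true, ha2]
      ring
    have hex : ∃ I : Finset (Fin n), f I < ∑ t ∈ I, (a + e h - e j) t := by
      by_contra hcon
      push_neg at hcon
      exact hnp ((hmem _).mpr ⟨hcon, htot⟩)
    obtain ⟨I, hI⟩ := hex
    have hcomp : ∑ t ∈ I, (a + e h - e j) t =
        ∑ t ∈ I, a t + (if h ∈ I then 1 else 0) - (if j ∈ I then 1 else 0) := by
      simp only [Pi.sub_apply, Pi.add_apply, Finset.sum_sub_distrib,
        Finset.sum_add_distrib, hesum]
    rw [hcomp] at hI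
    have hle := ha1 I
    by_cases h1 : h ∈ I
    · by_cases h2 : j ∈ I
      · exfalso; rw [if_pos h1, if_pos h2] at hI; omega
      · refine ⟨I, ?_, h1, h2⟩
        rw [if_pos h1, if_neg h2] at hI
        omega
    · exfalso
      rw [if_neg h1] at hI
      split_ifs at hI <;> omega
  -- choose the tight sets
  have hgdef : ∃ g : Fin n → Finset (Fin n), ∀ j : Fin n,
      (∑ t ∈ g j, a t = f (g j)) ∧ h ∈ g j ∧ (j < h → j ∉ g j) := by
    refine ⟨fun j => if hj : j < h then (step1 j hj).choose else univ, fun j => ?_⟩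
    by_cases hj : j < h
    · obtain ⟨t1, t2, t3⟩ := (step1 j hj).choose_spec
      simp only [dif_pos hj]
      exact ⟨t1, t2, fun _ => t3⟩
    · simp only [dif_neg hj]
      exact ⟨ha2, Finset.mem_univ h, fun hc => absurd hc hj⟩
  obtain ⟨g, hg⟩ := hgdef
  -- tight sets are closed under intersection
  have tight_inter : ∀ I J : Finset (Fin n), (∑ t ∈ I, a t = f I) →
      (∑ t ∈ J, a t = f J) → ∑ t ∈ I ∩ J, a t = f (I ∩ J) := by
    intro I J hI hJ
    have h1 := hsub I J
    have h2 := ha1 (I ∪ J)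
    have h3 := ha1 (I ∩ J)
    have h4 : ∑ t ∈ I ∪ J, a t + ∑ t ∈ I ∩ J, a t = ∑ t ∈ I, a t + ∑ t ∈ J, a t :=
      Finset.sum_union_inter
    omega
  set I : Finset (Fin n) := Finset.univ.inf g with hIdef
  have hItight : ∑ t ∈ I, a t = f I := by
    rw [hIdef]
    have : ∀ s : Finset (Fin n), ∑ t ∈ s.inf g, a t = f (s.inf g) := by
      intro s
      induction s using Finset.induction_on with
      | empty => simpa [Finset.inf_empty, Finset.top_eq_univ] using ha2
      | insert _ _ hx ih =>
        rw [Finset.inf_insert, Finset.inf_eq_inter]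
        exact tight_inter _ _ (hg _).1 ih
    exact this univ
  have hIh : h ∈ I := by
    have hsub' : ({h} : Finset (Fin n)) ≤ I :=
      Finset.le_inf fun j _ => Finset.singleton_subset_iff.mpr (hg j).2.1
    exact Finset.singleton_subset_iff.mp hsub'
  have hImin : ∀ t ∈ I, h ≤ t := by
    intro t ht
    by_contra hth
    push_neg at hth
    have hsub' : I ≤ g t := Finset.inf_le (Finset.mem_univ t)
    exact (hg t).2.2 hth (hsub' ht)
  -- the difference sum
  have hdiff : (astar h - a h) + (astar h' - a h') = 0 := by
    have h0 : ∑ t, (astar t - a t) = 0 := by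
      rw [Finset.sum_sub_distrib, ha2, hb2]; ring
    have h1 : ∑ t ∈ ({h, h'} : Finset (Fin n)), (astar t - a t)
        = ∑ t, (astar t - a t) := by
      refine Finset.sum_subset (Finset.subset_univ _) ?_
      intro t _ ht
      simp only [Finset.mem_insert, Finset.mem_singleton, not_or] at ht
      rw [hagree t ht.1 ht.2]; ring
    rw [h0] at h1
    rwa [Finset.sum_pair hne] at h1
  have hIh' : h' ∈ I := by
    by_contra hcon
    have hs : ∑ t ∈ I, (astar t - a t) = astar h - a h := by
      refine Finset.sum_eq_single_of_mem h hIh ?_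
      intro t ht htne
      have hth' : t ≠ h' := fun hc => hcon (hc ▸ ht)
      rw [hagree t htne hth']; ring
    rw [Finset.sum_sub_distrib] at hs
    have := hb1 I
    omega
  have hItightb : ∑ t ∈ I, astar t = f I := by
    have hs : ∑ t ∈ I, (astar t - a t) = ∑ t ∈ ({h, h'} : Finset (Fin n)), (astar t - a t) := by
      refine (Finset.sum_subset ?_ ?_).symm
      · intro t ht
        simp only [Finset.mem_insert, Finset.mem_singleton] at ht
        rcases ht with rfl | rfl
        · exact hIh
        · exact hIh'
      · intro t _ ht
        simp only [Finset.mem_insert, Finset.mem_singleton, not_or] at ht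
        rw [hagree t ht.1 ht.2]; ring
    rw [Finset.sum_pair hne] at hs
    rw [Finset.sum_sub_distrib] at hs
    omega
  have hjnotI : ∀ j : Fin n, j < h → j ∉ I := by
    intro j hj hjI
    exact absurd (hImin j hjI) (not_le.mpr hj)
  refine ⟨⟨I, ⟨hIh, hImin⟩, hItight, hItightb, hIh'⟩, ?_, ?_, ?_⟩
  · intro j hj
    exact keyNot astar I h j hItightb hIh (hjnotI j hj)
  · intro j hj
    rw [Equiv.swap_apply_right] at hj
    have hj' : j < h := by
      rcases eq_or_ne j h with rfl | hjh
      · rw [Equiv.swap_apply_left] at hj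
        exact absurd hj (not_lt.mpr hhlt.le)
      rcases eq_or_ne j h' with rfl | hjh'
      · rw [Equiv.swap_apply_right] at hj
        exact absurd hj (lt_irrefl h)
      · rwa [Equiv.swap_apply_of_ne_of_ne hjh hjh'] at hj
    exact keyNot a I h' j hItight hIh' (hjnotI j hj')
  · intro j hj
    rw [Equiv.swap_apply_right] at hj
    have hj' : j < h := by
      rcases eq_or_ne j h with rfl | hjh
      · rw [Equiv.swap_apply_left] at hj
        exact absurd hj (not_lt.mpr hhlt.le)
      rcases eq_or_ne j h' with rfl | hjh'
      · rw [Equiv.swap_apply_right] at hj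
        exact absurd hj (lt_irrefl h)
      · rwa [Equiv.swap_apply_of_ne_of_ne hjh hjh'] at hj
    exact keyNot astar I h' j hItightb hIh' (hjnotI j hj')
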